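/- Let p be an odd prime, r ≥ 1, e | p−1, and let K be the degree-n subfield of ℚ(ζ_{p^r}) with n = p^{r-1}(p−1)/e. Set C = sqrt((p^{r+1}+p^r+1−e²)/(12 p^{r+1})), υ = rn − (p^{r-1}−1)/e − 1, δ = (p^{r-1}−1)/(p^{r-1}(p−1)), and ω = C·p^{(δ + 1/n)/2}. If r ≥ 2, then ω ≤ 3^{−2/3}. -/

import Mathlib

lemma stmt17_cube (m : ℕ) (h : 3 ≤ m) : m ^ 3 ≤ 3 ^ m := by
  induction m with
  | zero => omega
  | succ k ih =>
    rcases Nat.lt_or_ge k 3 with hk | hk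
    · interval_cases k <;> norm_num
    · have h1 := ih hk
      have h2 : (k + 1) ^ 3 ≤ 3 * k ^ 3 := by
        nlinarith [Nat.mul_le_mul_right (k^2) hk, Nat.mul_le_mul_right k hk]
      calc (k + 1) ^ 3 ≤ 3 * k ^ 3 := h2
        _ ≤ 3 * 3 ^ k := by omega
        _ = 3 ^ (k + 1) := by ring

/-- Let `p` be an odd prime, `r ≥ 2`, `e ∣ p−1`,
`n = p^(r−1)(p−1)/e`, `C = √((p^(r+1)+p^r+1−e²)/(12 p^(r+1)))`,
`δ = (p^(r−1)−1)/(p^(r−1)(p−1))` and `ω = C · (√p)^(δ+1/n) = C · p^((δ+1/n)/2)`.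
Then `ω ≤ 3^(−2/3)`. -/
theorem stmt17 (p r e : ℕ) (hp : p.Prime) (hodd : Odd p) (hr : 2 ≤ r)
    (he : 0 < e) (hdvd : e ∣ p - 1)
    (n C δ ω : ℝ)
    (hn : n = (p : ℝ) ^ (r - 1) * ((p : ℝ) - 1) / e)
    (hC : C = Real.sqrt (((p : ℝ) ^ (r + 1) + (p : ℝ) ^ r + 1 - (e : ℝ) ^ 2) /
        (12 * (p : ℝ) ^ (r + 1))))
    (hδ : δ = ((p : ℝ) ^ (r - 1) - 1) / ((p : ℝ) ^ (r - 1) * ((p : ℝ) - 1)))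
    (hω : ω = C * (p : ℝ) ^ ((δ + 1 / n) / 2)) :
    ω ≤ (3 : ℝ) ^ (-(2 / 3) : ℝ) := by
  have hp3n : 3 ≤ p := by
    rcases hodd with ⟨k, hk⟩
    have := hp.two_le
    omega
  have hp3 : (3 : ℝ) ≤ (p : ℝ) := by exact_mod_cast hp3n
  have hp1 : (1 : ℝ) < (p : ℝ) := by linarith
  have hp0 : (0 : ℝ) < (p : ℝ) := by linarith
  have hep : (e : ℝ) ≤ (p : ℝ) - 1 := by
    have h1 : e ≤ p - 1 := Nat.le_of_dvd (by omega) hdvd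
    have : (e : ℝ) ≤ ((p - 1 : ℕ) : ℝ) := by exact_mod_cast h1
    rwa [Nat.cast_sub (by omega), Nat.cast_one] at this
  have he1 : (1 : ℝ) ≤ (e : ℝ) := by exact_mod_cast he
  set A : ℝ := (p : ℝ) ^ (r - 1) with hA
  have hAp : (p : ℝ) ≤ A := by
    calc (p : ℝ) = (p : ℝ) ^ 1 := (pow_one _).symm
      _ ≤ (p : ℝ) ^ (r - 1) := pow_le_pow_right₀ hp1.le (by omega)
  have hA0 : (0 : ℝ) < A := by positivity
  have hpm1 : (0 : ℝ) < (p : ℝ) - 1 := by linarith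
  -- bound on C
  have hC13 : C ≤ 1 / 3 := by
    rw [hC]
    have hP : (0 : ℝ) < (p : ℝ) ^ r := by positivity
    have harg : ((p : ℝ) ^ (r + 1) + (p : ℝ) ^ r + 1 - (e : ℝ) ^ 2) /
        (12 * (p : ℝ) ^ (r + 1)) ≤ 1 / 9 := by
      rw [div_le_div_iff₀ (by positivity) (by norm_num)]
      have hpr1 : (p : ℝ) ^ (r + 1) = (p : ℝ) * (p : ℝ) ^ r := by ring
      nlinarith [sq_nonneg ((e : ℝ) - 1), mul_le_mul_of_nonneg_right hp3 hP.le]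
    calc Real.sqrt _ ≤ Real.sqrt (1 / 9) := Real.sqrt_le_sqrt harg
      _ = 1 / 3 := by
          rw [show (1 / 9 : ℝ) = (1 / 3) ^ 2 by norm_num, Real.sqrt_sq (by norm_num)]
  have hC0 : 0 ≤ C := hC ▸ Real.sqrt_nonneg _
  -- bound on exponent
  have hexp : δ + 1 / n ≤ 2 / p := by
    have h1n : 1 / n = (e : ℝ) / (A * ((p : ℝ) - 1)) := by
      rw [hn, one_div_div]
    rw [hδ, h1n, ← add_div, div_le_div_iff₀ (by positivity) hp0]
    nlinarith [mul_le_mul_of_nonneg_right hAp (by linarith : (0:ℝ) ≤ (p:ℝ) - 2)]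
  -- p^(1/p) ≤ 3^(1/3)
  have hkey : (p : ℝ) ^ ((1 : ℝ) / p) ≤ (3 : ℝ) ^ ((1 : ℝ) / 3 : ℝ) := by
    have hnat := stmt17_cube p hp3n
    have hr1 : (p : ℝ) ^ (3 : ℝ) ≤ (3 : ℝ) ^ ((p : ℕ) : ℝ) := by
      rw [Real.rpow_natCast, show (3 : ℝ) = ((3 : ℕ) : ℝ) by norm_num,
        Real.rpow_natCast]
      exact_mod_cast hnat
    have hz : (0 : ℝ) ≤ 1 / (3 * p) := by positivity
    have := Real.rpow_le_rpow (by positivity) hr1 hz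
    rwa [← Real.rpow_mul hp0.le, ← Real.rpow_mul (by norm_num : (0:ℝ) ≤ 3),
      show (3 : ℝ) * (1 / (3 * (p:ℝ))) = 1 / p by field_simp,
      show ((p : ℕ) : ℝ) * (1 / (3 * (p:ℝ))) = 1 / 3 by field_simp] at this
  have hpow : (p : ℝ) ^ ((δ + 1 / n) / 2) ≤ (3 : ℝ) ^ ((1 : ℝ) / 3 : ℝ) := by
    calc (p : ℝ) ^ ((δ + 1 / n) / 2) ≤ (p : ℝ) ^ ((1 : ℝ) / p) := by
          apply Real.rpow_le_rpow_of_exponent_le hp1.le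
          have h2p : (2:ℝ) / p = 2 * (1 / p) := by ring
          linarith
      _ ≤ _ := hkey
  have hpowpos : (0 : ℝ) < (p : ℝ) ^ ((δ + 1 / n) / 2) := Real.rpow_pos_of_pos hp0 _
  calc ω = C * (p : ℝ) ^ ((δ + 1 / n) / 2) := hω
    _ ≤ (1 / 3) * ((3 : ℝ) ^ ((1 : ℝ) / 3 : ℝ)) :=
        mul_le_mul hC13 hpow hpowpos.le (by norm_num)
    _ = (3 : ℝ) ^ (-(2 / 3) : ℝ) := by
        rw [show (-(2 / 3) : ℝ) = 1 / 3 + (-1) by norm_num, Real.rpow_add (by norm_num),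
          Real.rpow_neg_one]
        ring
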